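/- Fix 0 ≤ p ≤ 2n+1 and let S := {γ ∈ ℤ^n : γ_j ≥ −1 for all j, and at most p of the coordinates γ_j equal −1}. Then P_n ⊗ Λ^p decomposes as the (internal) direct sum of the subspaces V^{p,n,γ} over γ ∈ S: the subspaces V^{p,n,γ} for γ ∈ S are linearly independent and their sum is all of P_n ⊗ Λ^p. -/

import Mathlib

open scoped TensorProduct

noncomputable section

namespace HeisenbergModel

variable (n : ℕ)

/-- Algebraic model of anti-Fock space: the polynomial algebra `ℂ[x_1,…,x_n]`. -/
abbrev P := MvPolynomial (Fin n) ℂ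

/-- The `(2n+1)`-dimensional coefficient space with distinguished basis
`τ^1,…,τ^n, τ^{1̄},…,τ^{n̄}, τ^w`. -/
abbrev Vc := Fin (2 * n + 1) → ℂ

/-- The exterior algebra `Λ = ⋀ V`. -/
abbrev Lam := ExteriorAlgebra ℂ (Vc n)

/-- The space `P_n ⊗ Λ` on which all operators act. -/
abbrev PL := P n ⊗[ℂ] Lam n

/-- Index of the basis vector `τ^j`. -/
def idx1 (j : Fin n) : Fin (2 * n + 1) := ⟨j.1, by omega⟩

/-- Index of the basis vector `τ^{j̄}`. -/
def idx2 (j : Fin n) : Fin (2 * n + 1) := ⟨n + j.1, by omega⟩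

/-- Index of the basis vector `τ^w`. -/
def idxw : Fin (2 * n + 1) := ⟨2 * n, by omega⟩

/-- The distinguished basis vectors of `V`. -/
def tau (i : Fin (2 * n + 1)) : Vc n := Pi.single i 1

/-- The dual-basis functionals on `V`. -/
def dualf (i : Fin (2 * n + 1)) : Module.Dual ℂ (Vc n) := LinearMap.proj i

/-- Annihilation operator `a_j = ∂/∂x_j` on `P_n`. -/
def aOp (j : Fin n) : P n →ₗ[ℂ] P n := (MvPolynomial.pderiv j).toLinearMap

/-- Creation operator `a_j^* = (multiplication by x_j)` on `P_n`. -/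
def aStarOp (j : Fin n) : P n →ₗ[ℂ] P n := LinearMap.mulLeft ℂ (MvPolynomial.X j)

/-- Left exterior multiplication `e(v)` on `Λ`. -/
def eMulV (v : Vc n) : Lam n →ₗ[ℂ] Lam n := LinearMap.mulLeft ℂ (ExteriorAlgebra.ι ℂ v)

/-- Interior multiplication (left contraction) by a dual functional on `Λ`. -/
def iMulF (f : Module.Dual ℂ (Vc n)) : Lam n →ₗ[ℂ] Lam n :=
  CliffordAlgebra.contractLeft (Q := (0 : QuadraticForm ℂ (Vc n))) f

/-- Lift an operator on `P_n` to `P_n ⊗ Λ` (acting on the first factor). -/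
def onP (f : P n →ₗ[ℂ] P n) : PL n →ₗ[ℂ] PL n := LinearMap.rTensor (Lam n) f

/-- Lift an operator on `Λ` to `P_n ⊗ Λ` (acting on the second factor). -/
def onL (f : Lam n →ₗ[ℂ] Lam n) : PL n →ₗ[ℂ] PL n := LinearMap.lTensor (P n) f

/-- `a_j` acting on `P_n ⊗ Λ`. -/
def A (j : Fin n) : PL n →ₗ[ℂ] PL n := onP n (aOp n j)

/-- `a_j^*` acting on `P_n ⊗ Λ`. -/
def Astar (j : Fin n) : PL n →ₗ[ℂ] PL n := onP n (aStarOp n j)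

/-- `e(τ^j)` acting on `P_n ⊗ Λ`. -/
def E1 (j : Fin n) : PL n →ₗ[ℂ] PL n := onL n (eMulV n (tau n (idx1 n j)))

/-- `e(τ^{j̄})` acting on `P_n ⊗ Λ`. -/
def E2 (j : Fin n) : PL n →ₗ[ℂ] PL n := onL n (eMulV n (tau n (idx2 n j)))

/-- `e(τ^w)` acting on `P_n ⊗ Λ`. -/
def Ew : PL n →ₗ[ℂ] PL n := onL n (eMulV n (tau n (idxw n)))

/-- `i(Z_j)` acting on `P_n ⊗ Λ`. -/
def I1 (j : Fin n) : PL n →ₗ[ℂ] PL n := onL n (iMulF n (dualf n (idx1 n j)))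

/-- `i(Z_{j̄})` acting on `P_n ⊗ Λ`. -/
def I2 (j : Fin n) : PL n →ₗ[ℂ] PL n := onL n (iMulF n (dualf n (idx2 n j)))

/-- `i(W)` acting on `P_n ⊗ Λ`. -/
def Iw : PL n →ₗ[ℂ] PL n := onL n (iMulF n (dualf n (idxw n)))

/-- `θ_j(t) = −√(−1)·√t·(e(τ^j) a_j^* + e(τ^{j̄}) a_j) − √(−1)·e(τ^j) e(τ^{j̄}) i(W)`. -/
def theta (t : ℝ) (j : Fin n) : PL n →ₗ[ℂ] PL n :=
  (-(Complex.I * (Real.sqrt t : ℝ))) • (E1 n j ∘ₗ Astar n j + E2 n j ∘ₗ A n j)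
    - Complex.I • (E1 n j ∘ₗ E2 n j ∘ₗ Iw n)

/-- `θ_j^†(t) = √(−1)·√t·(i(Z_j) a_j + i(Z_{j̄}) a_j^*) + √(−1)·e(τ^w) i(Z_{j̄}) i(Z_j)`. -/
def thetaDag (t : ℝ) (j : Fin n) : PL n →ₗ[ℂ] PL n :=
  (Complex.I * (Real.sqrt t : ℝ)) • (I1 n j ∘ₗ A n j + I2 n j ∘ₗ Astar n j)
    + Complex.I • (Ew n ∘ₗ I2 n j ∘ₗ I1 n j)

/-- `d(t) = Σ_j θ_j(t) − √(−1)·t·e(τ^w)`. -/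
def dOp (t : ℝ) : PL n →ₗ[ℂ] PL n :=
  (∑ j : Fin n, theta n t j) - (Complex.I * (t : ℝ)) • Ew n

/-- `U_{jj} = a_j^* a_j − e(τ^j) i(Z_j) + e(τ^{j̄}) i(Z_{j̄})`. -/
def Udiag (j : Fin n) : PL n →ₗ[ℂ] PL n :=
  Astar n j ∘ₗ A n j - E1 n j ∘ₗ I1 n j + E2 n j ∘ₗ I2 n j

/-- The `(i,j)` transposition operator `U_{ij} = a_i^* a_j − e(τ^j) i(Z_i) + e(τ^{ī}) i(Z_{j̄})`. -/
def Uoff (i j : Fin n) : PL n →ₗ[ℂ] PL n :=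
  Astar n i ∘ₗ A n j - E1 n j ∘ₗ I1 n i + E2 n i ∘ₗ I2 n j

/-- The degree-`p` component `Λ^p` of the exterior algebra, as a submodule. -/
def LamP (p : ℕ) : Submodule ℂ (Lam n) :=
  LinearMap.range (ExteriorAlgebra.ι ℂ : Vc n →ₗ[ℂ] Lam n) ^ p

/-- The subspace `P_n ⊗ Λ^p` of `P_n ⊗ Λ`. -/
def Wp (p : ℕ) : Submodule ℂ (PL n) :=
  LinearMap.range (TensorProduct.map (LinearMap.id : P n →ₗ[ℂ] P n) (LamP n p).subtype)

/-- The simultaneous eigenspace `V^{p,n,γ} = {v ∈ P_n ⊗ Λ^p : U_{jj} v = γ_j v for all j}`. -/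
def Vpγ (p : ℕ) (γ : Fin n → ℤ) : Submodule ℂ (PL n) :=
  Wp n p ⊓ ⨅ j : Fin n, Module.End.eigenspace (Udiag n j) ((γ j : ℂ))


/-! ### Auxiliary material -/

open ExteriorAlgebra

/-- The number operator `e(τ^k) i(Z_k)` on `Λ`. -/
def Nop (k : Fin (2 * n + 1)) : Lam n →ₗ[ℂ] Lam n :=
  eMulV n (tau n k) ∘ₗ iMulF n (dualf n k)

lemma iMulF_one (f : Module.Dual ℂ (Vc n)) : iMulF n f (1 : Lam n) = 0 :=
  CliffordAlgebra.contractLeft_one (Q := 0) f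

lemma iMulF_comm (f g : Module.Dual ℂ (Vc n)) (x : Lam n) :
    iMulF n f (iMulF n g x) = -(iMulF n g (iMulF n f x)) :=
  CliffordAlgebra.contractLeft_comm (Q := 0) f g x

lemma dualf_tau (k m : Fin (2 * n + 1)) :
    dualf n k (tau n m) = if k = m then 1 else 0 := by
  have h : dualf n k (tau n m) = (tau n m) k := rfl
  rw [h, tau, Pi.single_apply]

lemma iMulF_ι_mul (f : Module.Dual ℂ (Vc n)) (v : Vc n) (x : Lam n) :
    iMulF n f (ι ℂ v * x) = f v • x - ι ℂ v * iMulF n f x :=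
  CliffordAlgebra.contractLeft_ι_mul (Q := 0) f v x

lemma ι_swap (v w : Vc n) : (ι ℂ v : Lam n) * ι ℂ w = -(ι ℂ w * ι ℂ v) :=
  eq_neg_of_add_eq_zero_left (ι_add_mul_swap v w)

lemma Nop_apply (k : Fin (2 * n + 1)) (x : Lam n) :
    Nop n k x = ι ℂ (tau n k) * iMulF n (dualf n k) x := rfl

lemma Nop_mul_same (k : Fin (2 * n + 1)) (x : Lam n) :
    Nop n k (ι ℂ (tau n k) * x) = ι ℂ (tau n k) * x := by
  rw [Nop_apply, iMulF_ι_mul, dualf_tau, if_pos rfl, one_smul, mul_sub, ← mul_assoc,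
    ι_sq_zero, zero_mul, sub_zero]

lemma Nop_mul_ne {k a : Fin (2 * n + 1)} (h : k ≠ a) (x : Lam n) :
    Nop n k (ι ℂ (tau n a) * x) = ι ℂ (tau n a) * Nop n k x := by
  rw [Nop_apply, iMulF_ι_mul, dualf_tau, if_neg h, zero_smul, zero_sub, mul_neg, ← mul_assoc,
    ι_swap, neg_mul, neg_neg, mul_assoc, Nop_apply]

lemma Nop_list (k : Fin (2 * n + 1)) (L : List (Fin (2 * n + 1))) :
    Nop n k (L.map fun a => ι ℂ (tau n a)).prod
      = (if k ∈ L then (1 : ℂ) else 0) • (L.map fun a => ι ℂ (tau n a)).prod := by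
  induction L with
  | nil =>
      simp only [List.map_nil, List.prod_nil, List.not_mem_nil, if_false, zero_smul]
      rw [Nop_apply, iMulF_one, mul_zero]
  | cons a L ih =>
      simp only [List.map_cons, List.prod_cons, List.mem_cons]
      by_cases hka : k = a
      · subst hka
        rw [Nop_mul_same, if_pos (Or.inl rfl), one_smul]
      · rw [Nop_mul_ne n hka, ih, mul_smul_comm]
        by_cases hkL : k ∈ L
        · rw [if_pos hkL, if_pos (Or.inr hkL)]
        · rw [if_neg hkL, if_neg (by simp [hka, hkL])]

lemma Nop_comm {a b : Fin (2 * n + 1)} (hab : a ≠ b) (x : Lam n) :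
    Nop n a (Nop n b x) = Nop n b (Nop n a x) := by
  have key : ∀ (c d : Fin (2 * n + 1)), c ≠ d → ∀ y : Lam n,
      Nop n c (Nop n d y) = -(ι ℂ (tau n c) * (ι ℂ (tau n d) *
        iMulF n (dualf n c) (iMulF n (dualf n d) y))) := by
    intro c d hcd y
    rw [Nop_apply, Nop_apply, iMulF_ι_mul, dualf_tau, if_neg hcd, zero_smul,
      zero_sub, mul_neg]
  rw [key a b hab x, key b a hab.symm x]
  have hcontr : iMulF n (dualf n b) (iMulF n (dualf n a) x)
      = -(iMulF n (dualf n a) (iMulF n (dualf n b) x)) := iMulF_comm n _ _ x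
  rw [hcontr, mul_neg, mul_neg, neg_neg, ← mul_assoc, ← mul_assoc, ι_swap, neg_mul, neg_neg]

/-- The `P`-factor part of `U_{jj}`. -/
def Dop (j : Fin n) : P n →ₗ[ℂ] P n := aStarOp n j ∘ₗ aOp n j

/-- The `Λ`-factor part of `U_{jj}`. -/
def Mop (j : Fin n) : Lam n →ₗ[ℂ] Lam n := Nop n (idx2 n j) - Nop n (idx1 n j)

lemma Udiag_tmul (j : Fin n) (m : P n) (w : Lam n) :
    Udiag n j (m ⊗ₜ[ℂ] w) = (Dop n j m) ⊗ₜ[ℂ] w + m ⊗ₜ[ℂ] (Mop n j w) := by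
  simp only [Udiag, Dop, Mop, Astar, A, E1, E2, I1, I2, onP, onL, Nop,
    LinearMap.add_apply, LinearMap.sub_apply, LinearMap.comp_apply,
    LinearMap.rTensor_tmul, LinearMap.lTensor_tmul, TensorProduct.tmul_sub]
  abel

lemma Dop_monomial (j : Fin n) (α : Fin n →₀ ℕ) (c : ℂ) :
    Dop n j (MvPolynomial.monomial α c) = (α j : ℂ) • MvPolynomial.monomial α c := by
  rw [Dop, LinearMap.comp_apply]
  rw [show aOp n j (MvPolynomial.monomial α c)
      = MvPolynomial.monomial (α - Finsupp.single j 1) (c * (α j : ℂ)) by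
    rw [aOp]; exact MvPolynomial.pderiv_monomial]
  by_cases h : α j = 0
  · simp [aStarOp, h, MvPolynomial.smul_monomial]
  · rw [aStarOp, LinearMap.mulLeft_apply,
      show MvPolynomial.X (R := ℂ) j * MvPolynomial.monomial (α - Finsupp.single j 1)
          (c * (α j : ℂ))
        = MvPolynomial.monomial (Finsupp.single j 1 + (α - Finsupp.single j 1))
          (c * (α j : ℂ)) by
        rw [MvPolynomial.monomial_single_add, pow_one],
      show Finsupp.single j 1 + (α - Finsupp.single j 1) = α by
        rw [add_tsub_cancel_iff_le.2 (by rwa [Finsupp.single_le_iff, Nat.one_le_iff_ne_zero])],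
      MvPolynomial.smul_monomial, smul_eq_mul, mul_comm]

lemma Dop_comm (i j : Fin n) : Dop n i ∘ₗ Dop n j = Dop n j ∘ₗ Dop n i := by
  apply (MvPolynomial.basisMonomials (Fin n) ℂ).ext
  intro α
  simp only [MvPolynomial.coe_basisMonomials, LinearMap.comp_apply, Dop_monomial, map_smul,
    smul_smul, mul_comm]

lemma Mop_comm {i j : Fin n} (h : i ≠ j) (x : Lam n) :
    Mop n i (Mop n j x) = Mop n j (Mop n i x) := by
  have h11 : idx1 n i ≠ idx1 n j := by
    simp only [idx1, Ne, Fin.mk.injEq]; exact fun hh => h (Fin.ext hh)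
  have h22 : idx2 n i ≠ idx2 n j := by
    simp only [idx2, Ne, Fin.mk.injEq]
    intro hh; exact h (Fin.ext (by omega))
  have h12 : idx1 n i ≠ idx2 n j := by
    simp only [idx1, idx2, Ne, Fin.mk.injEq]; have := i.2; omega
  have h21 : idx2 n i ≠ idx1 n j := by
    simp only [idx1, idx2, Ne, Fin.mk.injEq]; have := j.2; omega
  simp only [Mop, LinearMap.sub_apply, map_sub]
  rw [Nop_comm n h22, Nop_comm n h21, Nop_comm n h12, Nop_comm n h11]
  abel

lemma commute_Udiag (i j : Fin n) : Commute (Udiag n i) (Udiag n j) := by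
  rcases eq_or_ne i j with rfl | hij
  · exact Commute.refl _
  show Udiag n i * Udiag n j = Udiag n j * Udiag n i
  rw [Module.End.mul_eq_comp, Module.End.mul_eq_comp]
  apply TensorProduct.ext'
  intro m w
  simp only [LinearMap.comp_apply, Udiag_tmul, map_add, Udiag_tmul]
  rw [show Dop n i (Dop n j m) = Dop n j (Dop n i m) from LinearMap.congr_fun (Dop_comm n i j) m,
    Mop_comm n hij]
  abel


lemma prod_mem_LamP (L : List (Fin (2 * n + 1))) :
    (L.map fun a => ι ℂ (tau n a)).prod ∈ LamP n L.length := by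
  induction L with
  | nil =>
      simp only [List.map_nil, List.prod_nil, List.length_nil, LamP, pow_zero]
      exact Submodule.mem_one.mpr ⟨1, map_one _⟩
  | cons a L ih =>
      simp only [List.map_cons, List.prod_cons, List.length_cons]
      rw [LamP, pow_succ']
      exact Submodule.mul_mem_mul ⟨tau n a, rfl⟩ ih

lemma tmul_mem_Wp {p : ℕ} (m : P n) {w : Lam n} (hw : w ∈ LamP n p) :
    m ⊗ₜ[ℂ] w ∈ Wp n p :=
  ⟨m ⊗ₜ[ℂ] ⟨w, hw⟩, by rw [TensorProduct.map_tmul]; rfl⟩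

lemma Udiag_eigen (j : Fin n) (α : Fin n →₀ ℕ) (L : List (Fin (2 * n + 1))) :
    Udiag n j ((MvPolynomial.monomial α 1) ⊗ₜ[ℂ] (L.map fun a => ι ℂ (tau n a)).prod)
      = ((α j : ℂ) - (if idx1 n j ∈ L then 1 else 0) + (if idx2 n j ∈ L then 1 else 0))
        • ((MvPolynomial.monomial α 1) ⊗ₜ[ℂ] (L.map fun a => ι ℂ (tau n a)).prod) := by
  rw [Udiag_tmul, Dop_monomial, Mop, LinearMap.sub_apply, Nop_list, Nop_list,
    show ((α j : ℂ) • (MvPolynomial.monomial α (1:ℂ))) ⊗ₜ[ℂ] (L.map fun a => ι ℂ (tau n a)).prod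
      = (α j : ℂ) • ((MvPolynomial.monomial α (1:ℂ)) ⊗ₜ[ℂ] (L.map fun a => ι ℂ (tau n a)).prod)
      from (TensorProduct.smul_tmul' _ _ _).symm]
  simp only [TensorProduct.tmul_sub, TensorProduct.tmul_smul]
  module

lemma tmul_mem_iSup (p : ℕ) (α : Fin n →₀ ℕ) (L : List (Fin (2 * n + 1))) (hL : L.length = p) :
    (MvPolynomial.monomial α 1) ⊗ₜ[ℂ] (L.map fun a => ι ℂ (tau n a)).prod
      ∈ ⨆ γ : {γ : Fin n → ℤ // (∀ j, -1 ≤ γ j) ∧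
          (Finset.univ.filter fun j => γ j = -1).card ≤ p}, Vpγ n p γ.1 := by
  classical
  set γ : Fin n → ℤ := fun j =>
    (α j : ℤ) - (if idx1 n j ∈ L then 1 else 0)
      + (if idx2 n j ∈ L then 1 else 0) with hγ
  have hmem : (MvPolynomial.monomial α 1) ⊗ₜ[ℂ] (L.map fun a => ι ℂ (tau n a)).prod
      ∈ Vpγ n p γ := by
    refine ⟨tmul_mem_Wp n _ (hL ▸ prod_mem_LamP n L), ?_⟩
    refine (Submodule.mem_iInf _).2 fun j => ?_
    rw [Module.End.mem_eigenspace_iff, Udiag_eigen]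
    congr 1
    simp only [hγ]
    push_cast [apply_ite (Int.cast : ℤ → ℂ)]
    ring
  have hS : (∀ j, -1 ≤ γ j) ∧ (Finset.univ.filter fun j => γ j = -1).card ≤ p := by
    constructor
    · intro j
      simp only [hγ]
      have : (0 : ℤ) ≤ (α j : ℤ) := Int.ofNat_nonneg _
      split_ifs <;> omega
    · have hsub : ∀ j ∈ (Finset.univ.filter fun j => γ j = -1), idx1 n j ∈ L.toFinset := by
        intro j hj
        simp only [Finset.mem_filter, hγ] at hj
        rw [List.mem_toFinset]
        by_contra hc
        rw [if_neg hc] at hj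
        have h2 := hj.2
        have : (0 : ℤ) ≤ (α j : ℤ) := Int.ofNat_nonneg _
        split_ifs at h2 <;> omega
      calc (Finset.univ.filter fun j => γ j = -1).card
          ≤ L.toFinset.card := by
            apply Finset.card_le_card_of_injOn (fun j => idx1 n j) hsub
            intro a _ b _ hab
            exact Fin.ext (by simpa [idx1, Fin.ext_iff] using hab)
        _ ≤ L.length := L.toFinset_card_le
        _ = p := hL
  exact le_iSup (fun γ : {γ : Fin n → ℤ // (∀ j, -1 ≤ γ j) ∧
      (Finset.univ.filter fun j => γ j = -1).card ≤ p} => Vpγ n p γ.1) ⟨γ, hS⟩ hmem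

lemma tmul_mem_iSup_of_mem_LamP (p : ℕ) (m : P n) {w : Lam n} (hw : w ∈ LamP n p) :
    m ⊗ₜ[ℂ] w ∈ ⨆ γ : {γ : Fin n → ℤ // (∀ j, -1 ≤ γ j) ∧
        (Finset.univ.filter fun j => γ j = -1).card ≤ p}, Vpγ n p γ.1 := by
  classical
  set T := ⨆ γ : {γ : Fin n → ℤ // (∀ j, -1 ≤ γ j) ∧
      (Finset.univ.filter fun j => γ j = -1).card ≤ p}, Vpγ n p γ.1 with hT
  have hw' : w ∈ Submodule.span ℂ (Set.range (ExteriorAlgebra.ιMulti ℂ p (M := Vc n))) := by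
    rw [ExteriorAlgebra.ιMulti_span_fixedDegree]
    exact hw
  clear hw
  induction hw' using Submodule.span_induction with
  | zero => rw [TensorProduct.tmul_zero]; exact zero_mem T
  | add x y hx hy ihx ihy => rw [TensorProduct.tmul_add]; exact add_mem ihx ihy
  | smul c x hx ihx => rw [TensorProduct.tmul_smul]; exact Submodule.smul_mem T c ihx
  | mem x hx =>
      obtain ⟨v, rfl⟩ := hx
      have hv : (ExteriorAlgebra.ιMulti ℂ p v : Lam n)
          = ∑ r : Fin p → Fin (2 * n + 1),
              (∏ i, v i (r i)) • ExteriorAlgebra.ιMulti ℂ p (fun i => tau n (r i)) := by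
        have hvi : v = fun i => ∑ k, (v i k) • tau n k := by
          funext i k'
          simp [tau, Finset.sum_apply, Pi.single_apply]
        conv_lhs => rw [hvi]
        rw [show (ExteriorAlgebra.ιMulti ℂ p (M := Vc n)) (fun i => ∑ k, (v i k) • tau n k)
            = (ExteriorAlgebra.ιMulti ℂ p (M := Vc n)).toMultilinearMap
              (fun i => ∑ k, (v i k) • tau n k) from rfl]
        rw [MultilinearMap.map_sum]
        refine Finset.sum_congr rfl fun r _ => ?_
        rw [MultilinearMap.map_smul_univ]
        rfl
      rw [hv, TensorProduct.tmul_sum]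
      refine Submodule.sum_mem T fun r _ => ?_
      rw [TensorProduct.tmul_smul]
      refine Submodule.smul_mem T _ ?_
      -- reduce over m
      have hm : m ∈ Submodule.span ℂ (Set.range ⇑(MvPolynomial.basisMonomials (Fin n) ℂ)) := by
        rw [Module.Basis.span_eq]; trivial
      induction hm using Submodule.span_induction with
      | zero => rw [TensorProduct.zero_tmul]; exact zero_mem T
      | add x y hx hy ihx ihy => rw [TensorProduct.add_tmul]; exact add_mem ihx ihy
      | smul c x hx ihx => rw [← TensorProduct.smul_tmul']; exact Submodule.smul_mem T c ihx
      | mem mx hmx =>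
          obtain ⟨α, rfl⟩ := hmx
          rw [show (MvPolynomial.basisMonomials (Fin n) ℂ) α = MvPolynomial.monomial α 1 by
            rw [MvPolynomial.coe_basisMonomials]]
          rw [show (ExteriorAlgebra.ιMulti ℂ p (fun i => tau n (r i)) : Lam n)
              = ((List.ofFn r).map fun a => ι ℂ (tau n a)).prod by
            rw [ExteriorAlgebra.ιMulti_apply, List.map_ofFn]; rfl]
          exact tmul_mem_iSup n p α (List.ofFn r) (by rw [List.length_ofFn])

/-- For `S = {γ ∈ ℤ^n : γ_j ≥ −1 for all j, and at most p of the γ_j equal −1}`, the space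
`P_n ⊗ Λ^p` is the internal direct sum of the subspaces `V^{p,n,γ}`, `γ ∈ S`: the family
is independent and its supremum is all of `P_n ⊗ Λ^p`. -/
theorem Vpγ_internal_direct_sum (n : ℕ) (hn : 1 ≤ n) (p : ℕ) (hp : p ≤ 2 * n + 1) :
    iSupIndep (fun γ : {γ : Fin n → ℤ // (∀ j, -1 ≤ γ j) ∧
        (Finset.univ.filter fun j => γ j = -1).card ≤ p} => Vpγ n p γ.1) ∧
    (⨆ γ : {γ : Fin n → ℤ // (∀ j, -1 ≤ γ j) ∧
        (Finset.univ.filter fun j => γ j = -1).card ≤ p}, Vpγ n p γ.1) = Wp n p := by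
  classical
  haveI : NoZeroSMulDivisors ℂ (PL n) := by
    refine ⟨fun {c x} h => ?_⟩
    rcases eq_or_ne c 0 with rfl | hc
    · exact Or.inl rfl
    · refine Or.inr ?_
      have := congrArg (fun y => c⁻¹ • y) h
      simpa [smul_smul, inv_mul_cancel₀ hc] using this
  constructor
  · -- independence
    have hind : iSupIndep fun χ : Fin n → ℂ =>
        ⨅ j, Module.End.maxGenEigenspace (Udiag n j) (χ j) :=
      Module.End.independent_iInf_maxGenEigenspace_of_forall_mapsTo
        (fun j : Fin n => Udiag n j)
        (fun i j φ => Module.End.mapsTo_maxGenEigenspace_of_comm (commute_Udiag n j i) φ)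
    have hinj : Function.Injective
        (fun γ : {γ : Fin n → ℤ // (∀ j, -1 ≤ γ j) ∧
            (Finset.univ.filter fun j => γ j = -1).card ≤ p} =>
          (fun j => ((γ.1 j : ℂ)) : Fin n → ℂ)) := by
      intro a b hab
      apply Subtype.ext
      funext j
      have h2 : ((a.1 j : ℂ)) = ((b.1 j : ℂ)) := congrFun hab j
      exact_mod_cast h2
    refine iSupIndep.mono (hind.comp hinj) fun γ => ?_
    refine le_trans inf_le_right (le_iInf fun j => le_trans (iInf_le _ j) ?_)
    exact (Module.End.genEigenspace (Udiag n j) _).monotone le_top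
  · apply le_antisymm
    · exact iSup_le fun γ => inf_le_left
    · rw [Wp, TensorProduct.range_map_eq_span_tmul, Submodule.span_le]
      rintro x ⟨m, w, rfl⟩
      exact tmul_mem_iSup_of_mem_LamP n p (LinearMap.id m) w.2


end HeisenbergModel
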